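/- Let n ≥ 2 and let m_1 < ... < m_n be an arithmetic sequence of positive integers with common difference d and gcd(m_1, d) = 1, with m_1 = q(n-1)+r, r ∈ {1,...,n-1}, α = q+d, k = n-r. Then the identity Σ_{s≥0} H(s) t^s = (1 + (n-1)(t + t^2 + ... + t^α) + (n-1-k)t^{α+1}) / (1-t)^2 holds as formal power series, where H(s) := C(s+2,2) + (n-2)C(s+1,2) for 0 ≤ s < α and H(s) := m_n s + α(2-n+k) - C(α+1,2) - (n-2)C(α,2) + 1 for s ≥ α. -/

import Mathlib

open PowerSeries

/-- Hilbert series identity: Σ H(s) tˢ · (1-t)² = 1 + (n-1)(t+⋯+t^α) + (n-1-k)t^{α+1}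
as formal power series over ℤ. -/
theorem stmt_6 (n d m1 q r : ℕ) (m : ℕ → ℕ)
    (hn : 2 ≤ n) (hd : 1 ≤ d) (hm1 : 1 ≤ m1)
    (hgcd : Nat.gcd m1 d = 1)
    (hm : ∀ i, 1 ≤ i → i ≤ n → m i = m1 + (i - 1) * d)
    (hdiv : m1 = q * (n - 1) + r) (hr1 : 1 ≤ r) (hr2 : r ≤ n - 1) :
    (PowerSeries.mk (fun s : ℕ =>
        if s < q + d then
          (Nat.choose (s + 2) 2 : ℤ) + ((n : ℤ) - 2) * (Nat.choose (s + 1) 2 : ℤ)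
        else
          (m n : ℤ) * s + (q + d : ℤ) * (2 - (n : ℤ) + ((n - r : ℕ) : ℤ))
            - (Nat.choose (q + d + 1) 2 : ℤ)
            - ((n : ℤ) - 2) * (Nat.choose (q + d) 2 : ℤ) + 1))
      * (1 - PowerSeries.X) ^ 2 =
    1 + PowerSeries.C (R := ℤ) ((n : ℤ) - 1) * (∑ i ∈ Finset.Icc 1 (q + d), PowerSeries.X ^ i)
      + PowerSeries.C (R := ℤ) ((n : ℤ) - 1 - ((n - r : ℕ) : ℤ)) * PowerSeries.X ^ (q + d + 1) := by
  have hα : 1 ≤ q + d := by omega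
  have hk : ((n - r : ℕ) : ℤ) = (n : ℤ) - r := by omega
  have hM : (m n : ℤ) = ((n:ℤ) - 1) * ((q:ℤ) + d) + r := by
    have h := hm n (by omega) le_rfl
    rw [hdiv] at h
    have h1 : ((n - 1 : ℕ) : ℤ) = (n:ℤ) - 1 := by omega
    rw [h]; push_cast [h1]; ring
  have cstep : ∀ a b : ℕ, a = b + 1 → ((a.choose 2 : ℕ) : ℤ) = ((b.choose 2 : ℕ) : ℤ) + b := by
    rintro a b rfl
    rw [Nat.choose_succ_succ b 1, Nat.choose_one_right]
    push_cast; ring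
  have t2 : ∀ s : ℕ, 2 * ((s.choose 2 : ℕ) : ℤ) = s * ((s:ℤ) - 1) := by
    intro s
    induction s with
    | zero => simp
    | succ t ih =>
      rw [Nat.choose_succ_succ t 1, Nat.choose_one_right]
      push_cast at ih ⊢; linarith
  set f : ℕ → ℤ := fun s =>
        if s < q + d then
          (Nat.choose (s + 2) 2 : ℤ) + ((n : ℤ) - 2) * (Nat.choose (s + 1) 2 : ℤ)
        else
          (m n : ℤ) * s + (q + d : ℤ) * (2 - (n : ℤ) + ((n - r : ℕ) : ℤ))
            - (Nat.choose (q + d + 1) 2 : ℤ)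
            - ((n : ℤ) - 2) * (Nat.choose (q + d) 2 : ℤ) + 1 with hf
  ext j
  have h2C : (C (R := ℤ) 2 : ℤ⟦X⟧) = 2 := by simp
  have key : (mk f) * (1 - X)^2 = mk f - C (R := ℤ) 2 * (mk f * X ^ 1) + mk f * X ^ 2 := by
    rw [h2C]; ring
  rw [key, map_add, map_add, map_sub, map_add, coeff_C_mul, coeff_C_mul, coeff_C_mul,
    map_sum]
  simp only [coeff_mul_X_pow', coeff_mk, coeff_one, coeff_X_pow, Finset.sum_ite_eq,
    Finset.mem_Icc]
  rcases lt_or_ge j 2 with hj | hj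
  · interval_cases j
    · -- j = 0
      rw [if_neg (by omega : ¬ (1:ℕ) ≤ 0), if_neg (by omega : ¬ (2:ℕ) ≤ 0),
        if_pos rfl, if_neg (by omega : ¬ ((1:ℕ) ≤ 0 ∧ 0 ≤ q + d)),
        if_neg (by omega : ¬ (0 = q + d + 1))]
      simp only [hf]
      rw [if_pos (by omega : 0 < q + d)]
      norm_num [Nat.choose]
    · -- j = 1
      rw [if_pos (le_refl 1), if_neg (by omega : ¬ (2:ℕ) ≤ 1),
        if_neg (by omega : ¬ (1 = 0)),
        if_pos (show (1:ℕ) ≤ 1 ∧ 1 ≤ q + d from ⟨le_refl 1, hα⟩),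
        if_neg (by omega : ¬ (1 = q + d + 1))]
      simp only [hf]
      rw [show (1:ℕ) - 1 = 0 from rfl, if_pos (by omega : 0 < q + d)]
      by_cases h1 : q + d = 1
      · rw [if_neg (by omega : ¬ 1 < q + d)]
        have hZ : (q:ℤ) + d = 1 := by omega
        norm_num [Nat.choose, h1]
        linear_combination hM + (1 + ((n - r : ℕ) : ℤ)) * hZ + hk
      · rw [if_pos (by omega : 1 < q + d)]
        norm_num [Nat.choose]
        ring
  · obtain ⟨k, rfl⟩ : ∃ k, j = k + 2 := ⟨j - 2, by omega⟩
    rw [if_pos (by omega : (1:ℕ) ≤ k + 2), if_pos (by omega : (2:ℕ) ≤ k + 2),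
      if_neg (by omega : ¬ (k + 2 = 0)),
      show k + 2 - 1 = k + 1 from by omega, show k + 2 - 2 = k from by omega]
    rcases Nat.lt_or_ge (k+2) (q+d) with hc | hc
    · -- quadratic region
      rw [if_pos (show (1:ℕ) ≤ k + 2 ∧ k + 2 ≤ q + d from ⟨by omega, by omega⟩),
        if_neg (by omega : ¬ (k + 2 = q + d + 1))]
      simp only [hf]
      rw [if_pos hc, if_pos (by omega : k + 1 < q + d), if_pos (by omega : k < q + d)]
      rw [cstep (k+2+2) (k+3) (by omega), cstep (k+3) (k+2) (by omega),
        cstep (k+2) (k+1) (by omega)]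
      push_cast
      ring
    · by_cases heq : k + 2 = q + d
      · rw [if_pos (show (1:ℕ) ≤ k + 2 ∧ k + 2 ≤ q + d from ⟨by omega, by omega⟩),
          if_neg (by omega : ¬ (k + 2 = q + d + 1))]
        simp only [hf]
        rw [if_neg (by omega : ¬ (k + 2 < q + d)), if_pos (by omega : k + 1 < q + d),
          if_pos (by omega : k < q + d)]
        have hZ : (q:ℤ) + d = (k:ℤ) + 2 := by omega
        rw [← heq, hM, hk, hZ]
        rw [cstep (k+2+1) (k+2) (by omega), cstep (k+2) (k+1) (by omega)]
        have tb := t2 (k+1)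
        push_cast at tb ⊢
        linear_combination (1 - (n:ℤ)) * tb
      · by_cases heq2 : k + 2 = q + d + 1
        · rw [if_neg (by omega : ¬ ((1:ℕ) ≤ k + 2 ∧ k + 2 ≤ q + d)), if_pos heq2]
          simp only [hf]
          rw [if_neg (by omega : ¬ (k + 2 < q + d)), if_neg (by omega : ¬ (k + 1 < q + d)),
            if_pos (by omega : k < q + d)]
          have hqd : q + d = k + 1 := by omega
          have hZ : (q:ℤ) + d = (k:ℤ) + 1 := by omega
          rw [hqd, hM, hk, hZ]
          rw [cstep (k+2) (k+1) (by omega)]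
          have tb := t2 (k+1)
          push_cast at tb ⊢
          linear_combination ((n:ℤ) - 1) * tb
        · rw [if_neg (by omega : ¬ ((1:ℕ) ≤ k + 2 ∧ k + 2 ≤ q + d)), if_neg heq2]
          simp only [hf]
          rw [if_neg (by omega : ¬ (k + 2 < q + d)), if_neg (by omega : ¬ (k + 1 < q + d)),
            if_neg (by omega : ¬ (k < q + d))]
          push_cast
          ring
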